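/- There exists a constant C > 0 such that for every real μ ≥ 1/2 and every real r with 0 < r ≤ 1, one has K_μ(r) ≤ C · 2^{-μ} r^{-μ} Γ(2μ) / Γ(μ + 1/2). -/

import Mathlib

open Real

/-- The modified Bessel function of the second kind, via the integral representation
`K_μ(r) = (π^{1/2} 2^{-μ} r^{μ} / Γ(μ + 1/2)) · ∫_{1}^{∞} e^{-rt} (t² - 1)^{μ - 1/2} dt`. -/
noncomputable def besselK (μ r : ℝ) : ℝ :=
  (Real.sqrt π * 2 ^ (-μ) * r ^ μ / Real.Gamma (μ + 1 / 2)) *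
    ∫ t in Set.Ioi (1 : ℝ), Real.exp (-r * t) * (t ^ 2 - 1) ^ (μ - 1 / 2)

lemma aux_integrable {μ r : ℝ} (hμ : 1 / 2 ≤ μ) (hr : 0 < r) :
    MeasureTheory.IntegrableOn (fun t : ℝ => t ^ (2 * μ - 1) * Real.exp (-(r * t)))
      (Set.Ioi 0) := by
  have := integrableOn_rpow_mul_exp_neg_mul_rpow (p := 1) (s := 2 * μ - 1) (b := r)
    (by linarith) one_pos hr
  refine this.congr_fun (fun x hx => ?_) measurableSet_Ioi
  dsimp only; rw [Real.rpow_one, neg_mul]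

lemma aux_ptwise {μ r t : ℝ} (hμ : 1 / 2 ≤ μ) (ht : (1 : ℝ) < t) :
    Real.exp (-r * t) * (t ^ 2 - 1) ^ (μ - 1 / 2) ≤
      t ^ (2 * μ - 1) * Real.exp (-(r * t)) := by
  have h1 : (0 : ℝ) ≤ t ^ 2 - 1 := by nlinarith
  have h2 : (t : ℝ) ^ 2 - 1 ≤ t ^ 2 := by linarith
  have hb : (t ^ 2 - 1) ^ (μ - 1 / 2) ≤ (t ^ 2) ^ (μ - 1 / 2) :=
    Real.rpow_le_rpow h1 h2 (by linarith)
  have ht0 : (0 : ℝ) < t := by linarith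
  calc Real.exp (-r * t) * (t ^ 2 - 1) ^ (μ - 1 / 2)
      ≤ Real.exp (-r * t) * (t ^ 2) ^ (μ - 1 / 2) :=
        mul_le_mul_of_nonneg_left hb (Real.exp_pos _).le
    _ = t ^ (2 * μ - 1) * Real.exp (-(r * t)) := by
        rw [← Real.rpow_natCast t 2, ← Real.rpow_mul ht0.le]
        ring_nf

/-- There is `C > 0` such that for all `μ ≥ 1/2` and `0 < r ≤ 1`,
`K_μ(r) ≤ C · 2^{-μ} r^{-μ} Γ(2μ) / Γ(μ + 1/2)`. -/
theorem statement7 :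
    ∃ C : ℝ, 0 < C ∧ ∀ μ r : ℝ, 1 / 2 ≤ μ → 0 < r → r ≤ 1 →
      besselK μ r ≤ C * (2 ^ (-μ) * r ^ (-μ) * Real.Gamma (2 * μ) / Real.Gamma (μ + 1 / 2)) := by
  refine ⟨Real.sqrt π, Real.sqrt_pos.mpr Real.pi_pos, fun μ r hμ hr hr1 => ?_⟩
  have hΓpos : 0 < Real.Gamma (μ + 1 / 2) := Real.Gamma_pos_of_pos (by linarith)
  have hint : MeasureTheory.IntegrableOn (fun t : ℝ => t ^ (2 * μ - 1) * Real.exp (-(r * t)))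
      (Set.Ioi 0) := aux_integrable hμ hr
  have hint1 : MeasureTheory.IntegrableOn (fun t : ℝ => t ^ (2 * μ - 1) * Real.exp (-(r * t)))
      (Set.Ioi 1) := hint.mono_set (Set.Ioi_subset_Ioi zero_le_one)
  have step1 : (∫ t in Set.Ioi (1 : ℝ), Real.exp (-r * t) * (t ^ 2 - 1) ^ (μ - 1 / 2)) ≤
      ∫ t in Set.Ioi (1 : ℝ), t ^ (2 * μ - 1) * Real.exp (-(r * t)) := by
    refine MeasureTheory.setIntegral_mono_on ?_ hint1 measurableSet_Ioi
      (fun t ht => aux_ptwise hμ ht)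
    refine MeasureTheory.Integrable.mono hint1 ?_
      (MeasureTheory.ae_restrict_of_forall_mem measurableSet_Ioi (fun t ht => ?_))
    · apply Measurable.aestronglyMeasurable
      fun_prop
    · have ht1 : (1 : ℝ) < t := ht
      have h1 : (0 : ℝ) ≤ t ^ 2 - 1 := by nlinarith
      have ht0 : (0 : ℝ) < t := by linarith
      rw [Real.norm_eq_abs, Real.norm_eq_abs, abs_of_nonneg (by positivity),
        abs_of_nonneg (by positivity)]
      exact aux_ptwise hμ ht1
  have step2 : (∫ t in Set.Ioi (1 : ℝ), t ^ (2 * μ - 1) * Real.exp (-(r * t))) ≤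
      ∫ t in Set.Ioi (0 : ℝ), t ^ (2 * μ - 1) * Real.exp (-(r * t)) := by
    refine MeasureTheory.setIntegral_mono_set hint ?_ ?_
    · refine MeasureTheory.ae_restrict_of_forall_mem measurableSet_Ioi (fun t ht => ?_)
      have : (0 : ℝ) < t := ht
      positivity
    · exact MeasureTheory.ae_of_all _ (Set.Ioi_subset_Ioi zero_le_one)
  have step3 : (∫ t in Set.Ioi (0 : ℝ), t ^ (2 * μ - 1) * Real.exp (-(r * t)))
      = (1 / r) ^ (2 * μ) * Real.Gamma (2 * μ) :=
    Real.integral_rpow_mul_exp_neg_mul_Ioi (by linarith) hr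
  have hI : (∫ t in Set.Ioi (1 : ℝ), Real.exp (-r * t) * (t ^ 2 - 1) ^ (μ - 1 / 2)) ≤
      (1 / r) ^ (2 * μ) * Real.Gamma (2 * μ) := step3 ▸ step1.trans step2
  have hApos : 0 ≤ Real.sqrt π * 2 ^ (-μ) * r ^ μ / Real.Gamma (μ + 1 / 2) := by positivity
  have hr2 : (1 / r : ℝ) ^ (2 * μ) = r ^ (-(2 * μ)) := by
    rw [one_div, Real.inv_rpow hr.le, ← Real.rpow_neg hr.le]
  have key : r ^ μ * r ^ (-(2 * μ)) = r ^ (-μ) := by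
    rw [← Real.rpow_add hr]; ring_nf
  unfold besselK
  calc (Real.sqrt π * 2 ^ (-μ) * r ^ μ / Real.Gamma (μ + 1 / 2)) *
        ∫ t in Set.Ioi (1 : ℝ), Real.exp (-r * t) * (t ^ 2 - 1) ^ (μ - 1 / 2)
      ≤ (Real.sqrt π * 2 ^ (-μ) * r ^ μ / Real.Gamma (μ + 1 / 2)) *
        ((1 / r) ^ (2 * μ) * Real.Gamma (2 * μ)) := mul_le_mul_of_nonneg_left hI hApos
    _ = Real.sqrt π * (2 ^ (-μ) * (r ^ μ * r ^ (-(2 * μ))) * Real.Gamma (2 * μ) /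
        Real.Gamma (μ + 1 / 2)) := by rw [hr2]; ring
    _ = Real.sqrt π * (2 ^ (-μ) * r ^ (-μ) * Real.Gamma (2 * μ) / Real.Gamma (μ + 1 / 2)) := by
        rw [key]
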